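/- Let m ≥ 3, let g be a positive element of DA(m), let l ≥ 0 be an integer, and let (a,b) be an ordering of (x_1,x_2), i.e. {a,b} = {x_1,x_2}. Then the number of right divisors of g of the form a^s b^t with integers s, t ≥ 0 and s + t = l is at most d(g) + 1. -/

import Mathlib

namespace ArtinRD

/-- The alternating product `xyxy...` with `m` factors, starting with `x`. -/
def altProd {G : Type*} [Monoid G] : ℕ → G → G → G
  | 0, _, _ => 1
  | n + 1, x, y => x * altProd n y x

/-- The Artin relators determined by a Coxeter-type matrix `M` (`⊤` meaning `∞`). -/
def artinRels (n : ℕ) (M : Fin n → Fin n → ℕ∞) : Set (FreeGroup (Fin n)) :=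
  {r | ∃ i j : Fin n, i ≠ j ∧ ∃ m : ℕ, M i j = (m : ℕ∞) ∧
    r = altProd m (FreeGroup.of i) (FreeGroup.of j) *
        (altProd m (FreeGroup.of j) (FreeGroup.of i))⁻¹}

/-- The Artin group associated to the matrix `M`. -/
abbrev ArtinGroup (n : ℕ) (M : Fin n → Fin n → ℕ∞) : Type := PresentedGroup (artinRels n M)

/-- The standard generator `x_i` of the Artin group. -/
def gen (n : ℕ) (M : Fin n → Fin n → ℕ∞) (i : Fin n) : ArtinGroup n M := PresentedGroup.of i

/-- The set `A = {x_1^{±1}, ..., x_n^{±1}}` of standard letters. -/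
def genSet (n : ℕ) (M : Fin n → Fin n → ℕ∞) : Set (ArtinGroup n M) :=
  {g | ∃ i : Fin n, g = gen n M i ∨ g = (gen n M i)⁻¹}

/-- Word length of `g` with respect to a set `S`: the least `N` such that `g` is a
product of `N` elements of `S`. -/
noncomputable def wordLength {G : Type*} [Group G] (S : Set G) (g : G) : ℕ :=
  sInf {N : ℕ | ∃ w : List G, (∀ a ∈ w, a ∈ S) ∧ w.length = N ∧ w.prod = g}

/-- The word length on an Artin group with respect to the standard letters. -/
noncomputable def ℓA (n : ℕ) (M : Fin n → Fin n → ℕ∞) : ArtinGroup n M → ℕ :=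
  wordLength (genSet n M)

/-- A letter: a generator index together with a sign (`true` = positive). -/
abbrev Letter (n : ℕ) := Fin n × Bool

/-- The group element corresponding to a letter. -/
def toGen (n : ℕ) (M : Fin n → Fin n → ℕ∞) (l : Letter n) : ArtinGroup n M :=
  if l.2 then gen n M l.1 else (gen n M l.1)⁻¹

/-- The group element represented by a word over the letters. -/
def wordElt (n : ℕ) (M : Fin n → Fin n → ℕ∞) (w : List (Letter n)) : ArtinGroup n M :=
  (w.map (toGen n M)).prod

/-- A word is geodesic if its length equals the word length of the element it represents. -/
def IsGeodesic (n : ℕ) (M : Fin n → Fin n → ℕ∞) (w : List (Letter n)) : Prop :=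
  wordLength (genSet n M) (wordElt n M w) = w.length

/-- `h` is a left divisor of `g`: the factorisation `g = h ⬝ (h⁻¹ g)` is geodesic. -/
def IsLeftDiv {G : Type*} [Group G] (ℓ : G → ℕ) (h g : G) : Prop :=
  ℓ h + ℓ (h⁻¹ * g) = ℓ g

/-- `h` is a right divisor of `g`: the factorisation `g = (g h⁻¹) ⬝ h` is geodesic. -/
def IsRightDiv {G : Type*} [Group G] (ℓ : G → ℕ) (h g : G) : Prop :=
  ℓ (g * h⁻¹) + ℓ h = ℓ g

/-- The two-generator ("dihedral") subgroup `G(i,j)`. -/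
def Gij (n : ℕ) (M : Fin n → Fin n → ℕ∞) (i j : Fin n) : Subgroup (ArtinGroup n M) :=
  Subgroup.closure {gen n M i, gen n M j}

/-- The letters `x_i^{±1}, x_j^{±1}` as group elements. -/
def lettersIJ (n : ℕ) (M : Fin n → Fin n → ℕ∞) (i j : Fin n) : Set (ArtinGroup n M) :=
  {gen n M i, (gen n M i)⁻¹, gen n M j, (gen n M j)⁻¹}

/-- The maximal `{x_i,x_j}`-prefix of a word. -/
def ijPrefix (n : ℕ) (i j : Fin n) (w : List (Letter n)) : List (Letter n) :=
  w.takeWhile (fun l => l.1 == i || l.1 == j)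

/-- `h` is a left divisor of `g` lying in `G(i,j)` of maximal word length. -/
def IsMaxLD (n : ℕ) (M : Fin n → Fin n → ℕ∞) (i j : Fin n) (g h : ArtinGroup n M) : Prop :=
  h ∈ Gij n M i j ∧ IsLeftDiv (ℓA n M) h g ∧
    ∀ h' ∈ Gij n M i j, IsLeftDiv (ℓA n M) h' g → ℓA n M h' ≤ ℓA n M h

/-- `h` is a right divisor of `g` lying in `G(i,j)` of maximal word length. -/
def IsMaxRD (n : ℕ) (M : Fin n → Fin n → ℕ∞) (i j : Fin n) (g h : ArtinGroup n M) : Prop :=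
  h ∈ Gij n M i j ∧ IsRightDiv (ℓA n M) h g ∧
    ∀ h' ∈ Gij n M i j, IsRightDiv (ℓA n M) h' g → ℓA n M h' ≤ ℓA n M h

/-- The Coxeter matrix of the dihedral Artin group `DA(m)`. -/
def DMat (m : ℕ) : Fin 2 → Fin 2 → ℕ∞ := fun i j => if i = j then 1 else (m : ℕ∞)

/-- The dihedral Artin group `DA(m) = ⟨x₁, x₂ ∣ ₘ(x₁,x₂) = ₘ(x₂,x₁)⟩`. -/
abbrev DA (m : ℕ) : Type := ArtinGroup 2 (DMat m)

/-- The word length on `DA(m)` with respect to `{x₁^{±1}, x₂^{±1}}`. -/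
noncomputable def ℓD (m : ℕ) : DA m → ℕ := ℓA 2 (DMat m)

/-- The Garside element `Δ = ₘ(x₁,x₂)` of `DA(m)`. -/
def Delta (m : ℕ) : DA m := altProd m (gen 2 (DMat m) 0) (gen 2 (DMat m) 1)

/-- A positive element of `DA(m)`: a product of the generators. -/
def posElt (m : ℕ) (g : DA m) : Prop :=
  g ∈ Submonoid.closure ({gen 2 (DMat m) 0, gen 2 (DMat m) 1} : Set (DA m))

/-- A negative element of `DA(m)`: a product of the inverses of the generators. -/
def negElt (m : ℕ) (g : DA m) : Prop :=
  g ∈ Submonoid.closure ({(gen 2 (DMat m) 0)⁻¹, (gen 2 (DMat m) 1)⁻¹} : Set (DA m))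

/-- `k` is the largest exponent such that `Δ^k` is a left divisor of `g`
(i.e. `d(g) = k` for a positive element `g`). -/
def IsMaxDeltaPow (m : ℕ) (k : ℕ) (g : DA m) : Prop :=
  IsLeftDiv (ℓD m) (Delta m ^ k) g ∧ ∀ k' : ℕ, IsLeftDiv (ℓD m) (Delta m ^ k') g → k' ≤ k

/-- `k` is the largest exponent such that `Δ^{-k}` is a left divisor of `g`
(i.e. `d(g) = k` for a negative element `g`). -/
def IsMaxNegDeltaPow (m : ℕ) (k : ℕ) (g : DA m) : Prop :=
  IsLeftDiv (ℓD m) ((Delta m)⁻¹ ^ k) g ∧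
    ∀ k' : ℕ, IsLeftDiv (ℓD m) ((Delta m)⁻¹ ^ k') g → k' ≤ k



/-! ### Chunk 1: word combinatorics -/

/-- alternating word of length `n` starting with `c` -/
def altW : ℕ → Bool → List Bool
  | 0, _ => []
  | n+1, c => c :: altW n (!c)

@[simp] lemma altW_zero (c : Bool) : altW 0 c = [] := rfl
@[simp] lemma altW_succ (n : ℕ) (c : Bool) : altW (n+1) c = c :: altW n (!c) := rfl

@[simp] lemma altW_length (n : ℕ) (c : Bool) : (altW n c).length = n := by
  induction n generalizing c with
  | zero => rfl
  | succ n ih => simp [ih]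

/-- letter at index `n` of the alternating word starting with `c` -/
def altL (n : ℕ) (c : Bool) : Bool := if n % 2 = 0 then c else !c

@[simp] lemma altL_zero (c : Bool) : altL 0 c = c := rfl

lemma altL_succ (n : ℕ) (c : Bool) : altL (n+1) c = altL n (!c) := by
  rcases Nat.even_or_odd n with h | h
  · have h0 : n % 2 = 0 := Nat.even_iff.mp h
    have h1 : (n+1) % 2 = 1 := by omega
    simp [altL, h0, h1]
  · have h0 : n % 2 = 1 := Nat.odd_iff.mp h
    have h1 : (n+1) % 2 = 0 := by omega
    simp [altL, h0, h1]

lemma altL_not (n : ℕ) (c : Bool) : altL n (!c) = !(altL n c) := by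
  by_cases h : n % 2 = 0 <;> simp [altL, h]

lemma altW_succ_snoc (n : ℕ) (c : Bool) : altW (n+1) c = altW n c ++ [altL n c] := by
  induction n generalizing c with
  | zero => rfl
  | succ n ih =>
    rw [show altW (n+1+1) c = c :: altW (n+1) (!c) from rfl, ih (!c), altL_succ]
    rfl

lemma altW_head? (n : ℕ) (c : Bool) (hn : 0 < n) : (altW n c).head? = some c := by
  cases n with
  | zero => omega
  | succ n => rfl

lemma altW_getLast? (n : ℕ) (c : Bool) : (altW (n+1) c).getLast? = some (altL n c) := by
  rw [altW_succ_snoc]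
  simp

/-- alternating list predicate -/
def Alt : List Bool → Prop := List.Chain' (fun p q => q = !p)

@[simp] lemma alt_nil : Alt [] := List.isChain_nil

@[simp] lemma alt_singleton (c : Bool) : Alt [c] := List.isChain_singleton c

lemma alt_altW (n : ℕ) (c : Bool) : Alt (altW n c) := by
  induction n generalizing c with
  | zero => simp
  | succ n ih =>
    cases n with
    | zero => simp
    | succ k =>
      simp only [altW_succ]
      exact List.isChain_cons_cons.mpr ⟨rfl, ih (!c)⟩

lemma alt_cons_iff (c : Bool) (W : List Bool) :
    Alt (c :: W) ↔ Alt W ∧ (W = [] ∨ W.head? = some (!c)) := by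
  cases W with
  | nil => simp
  | cons d w =>
    simp only [Alt, List.Chain', List.isChain_cons_cons, List.head?_cons, Option.some.injEq]
    constructor
    · rintro ⟨h1, h2⟩
      exact ⟨h2, Or.inr h1⟩
    · rintro ⟨h1, h2⟩
      rcases h2 with h2 | h2
      · exact absurd h2 (by simp)
      · exact ⟨h2, h1⟩

/-- an alternating word is determined by head and length -/
lemma alt_eq_altW (W : List Bool) (hW : Alt W) (c : Bool) (hc : W.head? = some c) :
    W = altW W.length c := by
  induction W generalizing c with
  | nil => simp at hc
  | cons d w ih =>
    have hc2 : d = c := by simpa using hc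
    subst hc2
    rcases (alt_cons_iff d w).mp hW with ⟨h1, h2⟩
    rcases h2 with h2 | h2
    · subst h2; rfl
    · have := ih h1 (!d) h2
      simp only [List.length_cons, altW_succ]
      rw [← this]

/-- length of the maximal alternating prefix -/
def runL : List Bool → ℕ
  | [] => 0
  | [_] => 1
  | c :: d :: w => if c = !d then runL (d :: w) + 1 else 1

@[simp] lemma runL_nil : runL [] = 0 := rfl
@[simp] lemma runL_single (c : Bool) : runL [c] = 1 := rfl

lemma runL_cons (c : Bool) (W : List Bool) :
    runL (c :: W) = if W.head? = some (!c) then runL W + 1 else 1 := by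
  cases W with
  | nil => simp [runL]
  | cons d w =>
    have hb : (c = !d) = (d = !c) := by cases c <;> cases d <;> simp
    simp only [runL, List.head?_cons, Option.some.injEq, hb]

lemma runL_le_length (W : List Bool) : runL W ≤ W.length := by
  induction W with
  | nil => simp
  | cons c w ih =>
    rw [runL_cons]
    by_cases h : w.head? = some (!c) <;> simp [h] <;> omega

lemma runL_pos (W : List Bool) (h : W ≠ []) : 0 < runL W := by
  cases W with
  | nil => exact absurd rfl h
  | cons c w => rw [runL_cons]; by_cases h : w.head? = some (!c) <;> simp [h]

lemma alt_runL_eq_length (W : List Bool) (hW : Alt W) : runL W = W.length := by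
  induction W with
  | nil => simp
  | cons c w ih =>
    rcases (alt_cons_iff c w).mp hW with ⟨h1, h2⟩
    rcases h2 with h2 | h2
    · subst h2; simp
    · rw [runL_cons, if_pos h2, ih h1]; simp

lemma alt_take_runL (W : List Bool) : Alt (W.take (runL W)) := by
  induction W with
  | nil => simp
  | cons c w ih =>
    rw [runL_cons]
    by_cases h : w.head? = some (!c)
    · rw [if_pos h]
      simp only [List.take_succ_cons]
      rw [alt_cons_iff]
      refine ⟨ih, ?_⟩
      cases w with
      | nil => left; simp
      | cons d w' =>
        right
        simp only [List.head?_cons, Option.some.injEq] at h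
        subst h
        have hp : 0 < runL ((!c) :: w') := runL_pos _ (by simp)
        cases hr : runL ((!c) :: w') with
        | zero => omega
        | succ k => simp
    · rw [if_neg h]; simp

lemma runL_prefix (W : List Bool) (c : Bool) (hc : W.head? = some c) (n : ℕ)
    (hn : n ≤ runL W) : W.take n = altW n c := by
  rcases Nat.eq_zero_or_pos n with rfl | hpos
  · simp
  have h1 : Alt (W.take n) := by
    have : W.take n = (W.take (runL W)).take n := by
      rw [List.take_take, min_eq_left hn]
    rw [this]
    exact (alt_take_runL W).take n
  have hh : (W.take n).head? = some c := by
    cases W with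
    | nil => simp at hc
    | cons d w =>
      cases n with
      | zero => omega
      | succ k => simpa using hc
  have hlen : (W.take n).length = n := by
    rw [List.length_take]
    have := runL_le_length W
    omega
  have := alt_eq_altW _ h1 c hh
  rwa [hlen] at this


/-! ### Chunk 2: Delta-free words, junctions, flip -/

/-- `W` contains no alternating run of length `m` -/
def DFree (m : ℕ) (W : List Bool) : Prop := ∀ n, runL (W.drop n) < m

lemma dfree_nil (m : ℕ) (hm : 0 < m) : DFree m [] := by
  intro n; simpa using hm

lemma dfree_of_lt (m : ℕ) (W : List Bool) (h : W.length < m) : DFree m W := by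
  intro n
  calc runL (W.drop n) ≤ (W.drop n).length := runL_le_length _
    _ ≤ W.length := by simp
    _ < m := h

lemma dfree_cons (m : ℕ) (c : Bool) (W : List Bool) :
    DFree m (c :: W) ↔ runL (c :: W) < m ∧ DFree m W := by
  constructor
  · intro h
    exact ⟨h 0, fun n => h (n+1)⟩
  · rintro ⟨h1, h2⟩ n
    cases n with
    | zero => exact h1
    | succ k => exact h2 k

lemma dfree_suffix (m : ℕ) (V W : List Bool) (h : V <:+ W) (hW : DFree m W) :
    DFree m V := by
  rcases h with ⟨s, rfl⟩
  intro n
  have : (s ++ V).drop (s.length + n) = V.drop n := by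
    rw [List.drop_append]
    simp
  rw [← this]
  exact hW _

lemma getLast?_cons_of_ne_nil (x : Bool) (X : List Bool) (h : X ≠ []) :
    (x :: X).getLast? = X.getLast? := by
  cases X with
  | nil => exact absurd rfl h
  | cons y X' => simp

lemma getLast?_drop_of_ne_nil (X : List Bool) (n : ℕ) (h : X.drop n ≠ []) :
    (X.drop n).getLast? = X.getLast? := by
  conv_rhs => rw [← List.take_append_drop n X]
  rw [List.getLast?_append]
  cases hl : (X.drop n).getLast? with
  | none => exact absurd (List.getLast?_eq_none_iff.mp hl) h
  | some e => rfl

lemma runL_append_block (X B : List Bool) (e : Bool) (hX : Alt X)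
    (hl : X.getLast? = some e) (hb : B.head? = some e) :
    runL (X ++ B) = X.length := by
  induction X with
  | nil => simp at hl
  | cons x X' ih =>
    cases X' with
    | nil =>
      have he : x = e := by simpa using hl
      subst he
      have : ¬ (B.head? = some (!x)) := by
        rw [hb]
        simp only [Option.some.injEq]
        cases x <;> simp
      simp [runL_cons, this]
    | cons y X'' =>
      rcases (alt_cons_iff x (y :: X'')).mp hX with ⟨h1, h2⟩
      have hy : y = !x := by
        rcases h2 with h2 | h2
        · simp at h2
        · simpa using h2
      have hl' : (y :: X'').getLast? = some e := by
        rw [← getLast?_cons_of_ne_nil x _ (by simp)]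
        exact hl
      have ihr := ih h1 hl'
      have hhead : ((y :: X'') ++ B).head? = some (!x) := by simp [hy]
      calc runL ((x :: y :: X'') ++ B) = runL (x :: ((y :: X'') ++ B)) := rfl
        _ = runL ((y :: X'') ++ B) + 1 := by rw [runL_cons, if_pos hhead]
        _ = (y :: X'').length + 1 := by rw [ihr]
        _ = (x :: y :: X'').length := by simp

lemma runL_append_ext (X B : List Bool) (e : Bool) (hX : Alt X)
    (hl : X.getLast? = some e) (hb : B.head? = some (!e)) :
    runL (X ++ B) = X.length + runL B := by
  induction X with
  | nil => simp at hl
  | cons x X' ih =>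
    cases X' with
    | nil =>
      have he : x = e := by simpa using hl
      subst he
      simp [runL_cons, hb]
      omega
    | cons y X'' =>
      rcases (alt_cons_iff x (y :: X'')).mp hX with ⟨h1, h2⟩
      have hy : y = !x := by
        rcases h2 with h2 | h2
        · simp at h2
        · simpa using h2
      have hl' : (y :: X'').getLast? = some e := by
        rw [← getLast?_cons_of_ne_nil x _ (by simp)]
        exact hl
      have ihr := ih h1 hl'
      have hhead : ((y :: X'') ++ B).head? = some (!x) := by simp [hy]
      calc runL ((x :: y :: X'') ++ B) = runL (x :: ((y :: X'') ++ B)) := rfl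
        _ = runL ((y :: X'') ++ B) + 1 := by rw [runL_cons, if_pos hhead]
        _ = (y :: X'').length + runL B + 1 := by rw [ihr]
        _ = (x :: y :: X'').length + runL B := by simp; omega

lemma runL_append_ge (X B : List Bool) (hX : Alt X) (hne : X ≠ []) :
    X.length ≤ runL (X ++ B) := by
  cases hB : B with
  | nil =>
    rw [List.append_nil, alt_runL_eq_length X hX]
  | cons d B' =>
    have hl : ∃ e, X.getLast? = some e := by
      cases hg : X.getLast? with
      | none => exact absurd (List.getLast?_eq_none_iff.mp hg) hne
      | some e => exact ⟨e, rfl⟩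
    rcases hl with ⟨e, he⟩
    by_cases hd : d = e
    · subst hd
      rw [runL_append_block X (d :: B') d hX he (by simp)]
    · have hd' : d = !e := by cases d <;> cases e <;> simp_all
      subst hd'
      rw [runL_append_ext X ((!e) :: B') e hX he (by simp)]
      omega

lemma dfree_append (m : ℕ) (X B : List Bool) (hX : Alt X) (hlen : X.length < m)
    (hB : DFree m B) (e : Bool) (hl : X.getLast? = some e) (hb : B.head? = some e) :
    DFree m (X ++ B) := by
  intro n
  by_cases hn : n < X.length
  · have hd : (X ++ B).drop n = X.drop n ++ B := by
      rw [List.drop_append]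
      have : n - X.length = 0 := by omega
      rw [this]
      simp
    rw [hd]
    have hne : X.drop n ≠ [] := by
      intro hcontra
      have := congrArg List.length hcontra
      simp at this
      omega
    have hXd : Alt (X.drop n) := hX.drop n
    have hld : (X.drop n).getLast? = some e := by
      rw [getLast?_drop_of_ne_nil X n hne]; exact hl
    rw [runL_append_block (X.drop n) B e hXd hld hb]
    calc (X.drop n).length ≤ X.length := by simp
      _ < m := hlen
  · have hd : (X ++ B).drop n = B.drop (n - X.length) := by
      rw [List.drop_append]
      have : X.drop n = [] := by
        apply List.drop_eq_nil_of_le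
        omega
      rw [this, List.nil_append]
    rw [hd]
    exact hB _

/-! flip -/

/-- flip a letter (conjugation by Δ): identity for even `m`, negation for odd `m` -/
def flL (m : ℕ) (c : Bool) : Bool := if m % 2 = 0 then c else !c

lemma flL_flL (m : ℕ) (c : Bool) : flL m (flL m c) = c := by
  by_cases h : m % 2 = 0 <;> simp [flL, h]

lemma flL_not (m : ℕ) (c : Bool) : flL m (!c) = !(flL m c) := by
  by_cases h : m % 2 = 0 <;> simp [flL, h]

lemma flL_inj (m : ℕ) (c d : Bool) (h : flL m c = flL m d) : c = d := by
  by_cases hm : m % 2 = 0 <;> simp [flL, hm] at h <;> exact h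

/-- flip a word letterwise -/
def flW (m : ℕ) (W : List Bool) : List Bool := W.map (flL m)

@[simp] lemma flW_nil (m : ℕ) : flW m [] = [] := rfl
@[simp] lemma flW_cons (m : ℕ) (c : Bool) (W : List Bool) :
    flW m (c :: W) = flL m c :: flW m W := rfl
@[simp] lemma flW_length (m : ℕ) (W : List Bool) : (flW m W).length = W.length := by
  simp [flW]

lemma flW_append (m : ℕ) (W V : List Bool) : flW m (W ++ V) = flW m W ++ flW m V := by
  simp [flW]

lemma flW_flW (m : ℕ) (W : List Bool) : flW m (flW m W) = W := by
  simp only [flW, List.map_map]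
  have : (flL m ∘ flL m) = id := by
    funext c; simp [Function.comp, flL_flL]
  rw [this, List.map_id]

lemma flW_altW (m n : ℕ) (c : Bool) : flW m (altW n c) = altW n (flL m c) := by
  induction n generalizing c with
  | zero => rfl
  | succ k ih => simp [ih, flL_not]

lemma flW_drop (m : ℕ) (W : List Bool) (n : ℕ) : (flW m W).drop n = flW m (W.drop n) := by
  simp [flW, List.map_drop]

lemma flW_head? (m : ℕ) (W : List Bool) : (flW m W).head? = W.head?.map (flL m) := by
  simp [flW]

lemma runL_flW (m : ℕ) (W : List Bool) : runL (flW m W) = runL W := by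
  induction W with
  | nil => rfl
  | cons c w ih =>
    rw [flW_cons, runL_cons, runL_cons, ih]
    cases w with
    | nil => simp
    | cons d w' =>
      by_cases hd : d = !c
      · subst hd
        simp [flL_not]
      · have h2 : ¬ (flL m d = !(flL m c)) := by
          rw [← flL_not]
          intro hcontra
          exact hd (flL_inj m _ _ hcontra)
        simp only [flW_cons, List.head?_cons, Option.some.injEq]
        rw [if_neg hd, if_neg h2]

lemma dfree_flW (m : ℕ) (W : List Bool) (h : DFree m W) : DFree m (flW m W) := by
  intro n
  rw [flW_drop, runL_flW]
  exact h n

lemma alt_reverse (W : List Bool) (hW : Alt W) : Alt W.reverse := by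
  show List.IsChain _ W.reverse
  rw [List.isChain_reverse]
  exact List.IsChain.imp (fun a b h => show a = !b by subst h; simp) hW

lemma alt_flW (m : ℕ) (W : List Bool) (hW : Alt W) : Alt (flW m W) := by
  induction W with
  | nil => simp
  | cons c w ih =>
    rcases (alt_cons_iff c w).mp hW with ⟨h1, h2⟩
    rw [flW_cons, alt_cons_iff]
    refine ⟨ih h1, ?_⟩
    rcases h2 with h2 | h2
    · left; simp [h2]
    · right
      rw [flW_head?, h2]
      simp [flL_not]

lemma suffix_append_cases (X B V : List Bool) (h : V <:+ X ++ B) :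
    V <:+ B ∨ ∃ X', X' <:+ X ∧ X' ≠ [] ∧ V = X' ++ B := by
  induction X generalizing V with
  | nil => left; simpa using h
  | cons x X' ih =>
    rcases h with ⟨s, hs⟩
    cases s with
    | nil =>
      right
      exact ⟨x :: X', List.suffix_rfl, by simp, by simpa using hs⟩
    | cons y s' =>
      have hs' : s' ++ V = X' ++ B := by
        have := congrArg List.tail hs
        simpa using this
      rcases ih V ⟨s', hs'⟩ with h | ⟨X'', h1, h2, h3⟩
      · left; exact h
      · right; exact ⟨X'', h1.trans (List.suffix_cons x X'), h2, h3⟩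


/-! ### Chunk 3: model operations -/

/-- multiply a normal form on the right by the letter `c` -/
def fwdZ (m : ℕ) (c : Bool) (z : ℤ × List Bool) : ℤ × List Bool :=
  if runL (c :: z.2) < m then (z.1, c :: z.2) else (z.1 + 1, flW m (z.2.drop (m-1)))

/-- multiply a normal form on the right by the inverse of the letter `c` -/
def bwdZ (m : ℕ) (c : Bool) (z : ℤ × List Bool) : ℤ × List Bool :=
  if z.2.head? = some c then (z.1, z.2.tail) else (z.1 - 1, altW (m-1) (!c) ++ flW m z.2)

lemma extract_structure (m : ℕ) (hm : 3 ≤ m) (c : Bool) (W : List Bool)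
    (h : ¬ runL (c :: W) < m) :
    W.take (m-1) = altW (m-1) (!c) := by
  have h1 : m ≤ runL (c :: W) := not_lt.mp h
  have h2 : (c :: W).take m = altW m c :=
    runL_prefix (c :: W) c (by simp) m h1
  have h3 : (c :: W).take m = c :: W.take (m-1) := by
    cases hm' : m with
    | zero => omega
    | succ k => simp [hm']
  have h4 : altW m c = c :: altW (m-1) (!c) := by
    cases hm' : m with
    | zero => omega
    | succ k => simp [hm']
  rw [h3, h4] at h2
  exact (List.cons.injEq _ _ _ _).mp h2 |>.2

lemma gl_altW (m : ℕ) (hm : 3 ≤ m) (c : Bool) :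
    (altW (m-1) (!c)).getLast? = some (if m % 2 = 0 then !c else c) := by
  have h1 : m - 1 = (m-2) + 1 := by omega
  rw [h1, altW_getLast?]
  have h2 : (m-2) % 2 = m % 2 := by omega
  by_cases hp : m % 2 = 0
  · simp [altL, h2, hp]
  · have hp1 : m % 2 = 1 := by omega
    simp [altL, h2, hp1]

lemma flL_gl (m : ℕ) (hm : 3 ≤ m) (c : Bool) :
    flL m (if m % 2 = 0 then !c else c) = !c := by
  by_cases hp : m % 2 = 0 <;> simp [flL, hp]

lemma extract_head (m : ℕ) (hm : 3 ≤ m) (c : Bool) (W : List Bool)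
    (hW : DFree m W) (h : ¬ runL (c :: W) < m) (e : Bool)
    (he : (W.drop (m-1)).head? = some e) : e = (if m % 2 = 0 then !c else c) := by
  set g := (if m % 2 = 0 then !c else c) with hg
  by_contra hne
  have heg : e = !g := by revert hne; cases e <;> cases g <;> simp
  have hsplit : W = altW (m-1) (!c) ++ W.drop (m-1) := by
    conv_lhs => rw [← List.take_append_drop (m-1) W]
    rw [extract_structure m hm c W h]
  have hrun : runL W = (m-1) + runL (W.drop (m-1)) := by
    conv_lhs => rw [hsplit]
    rw [runL_append_ext (altW (m-1) (!c)) (W.drop (m-1)) g (alt_altW _ _)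
      (gl_altW m hm c) (by rw [he, heg])]
    simp
  have hpos : 0 < runL (W.drop (m-1)) := by
    apply runL_pos
    intro hcontra
    rw [hcontra] at he
    simp at he
  have := hW 0
  simp only [List.drop_zero] at this
  omega

lemma bwd_dfree (m : ℕ) (hm : 3 ≤ m) (c : Bool) (W : List Bool) (hW : DFree m W)
    (h : ¬ W.head? = some c) : DFree m (altW (m-1) (!c) ++ flW m W) := by
  cases W with
  | nil =>
    simp only [flW_nil, List.append_nil]
    exact dfree_of_lt m _ (by simp; omega)
  | cons d W' =>
    have hd : d = !c := by
      simp only [List.head?_cons, Option.some.injEq] at h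
      cases d <;> cases c <;> simp_all
    subst hd
    apply dfree_append m _ _ (alt_altW _ _) (by simp; omega) (dfree_flW m _ hW)
      (if m % 2 = 0 then !c else c) (gl_altW m hm c)
    have : flL m (!c) = (if m % 2 = 0 then !c else c) := by
      by_cases hp : m % 2 = 0 <;> simp [flL, hp]
    simp [this]

lemma bwd_fwd (m : ℕ) (hm : 3 ≤ m) (c : Bool) (k : ℤ) (W : List Bool) (hW : DFree m W) :
    bwdZ m c (fwdZ m c (k, W)) = (k, W) := by
  by_cases h : runL (c :: W) < m
  · rw [fwdZ, if_pos h, bwdZ]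
    simp
  · rw [fwdZ, if_neg h]
    have hhead : ¬ ((flW m (W.drop (m-1))).head? = some c) := by
      cases hD : (W.drop (m-1)) with
      | nil => simp [hD]
      | cons e D' =>
        have he : e = (if m % 2 = 0 then !c else c) :=
          extract_head m hm c W hW h e (by rw [hD]; rfl)
        simp only [flW_cons, List.head?_cons, Option.some.injEq]
        rw [he, flL_gl m hm c]
        cases c <;> simp
    rw [bwdZ, if_neg (by simpa using hhead)]
    simp only [flW_flW]
    rw [Prod.mk.injEq]
    refine ⟨by omega, ?_⟩
    conv_rhs => rw [← List.take_append_drop (m-1) W]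
    rw [extract_structure m hm c W h]

lemma fwd_bwd (m : ℕ) (hm : 3 ≤ m) (c : Bool) (k : ℤ) (W : List Bool) (hW : DFree m W) :
    fwdZ m c (bwdZ m c (k, W)) = (k, W) := by
  by_cases h : W.head? = some c
  · cases W with
    | nil => simp at h
    | cons d W' =>
      have hd : d = c := by simpa using h
      rw [bwdZ, if_pos h]
      simp only [List.tail_cons]
      rw [fwdZ]
      dsimp only
      have hr : runL (c :: W') < m := by rw [← hd]; exact hW 0
      rw [if_pos hr, hd]
  · rw [bwdZ, if_neg h]
    rw [fwdZ]
    dsimp only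
    have hfull : c :: (altW (m-1) (!c) ++ flW m W) = altW m c ++ flW m W := by
      have h5 : altW m c = c :: altW (m-1) (!c) := by
        cases hm' : m with
        | zero => omega
        | succ j => simp [hm']
      rw [h5]
      rfl
    have hge : m ≤ runL (c :: (altW (m-1) (!c) ++ flW m W)) := by
      rw [hfull]
      have := runL_append_ge (altW m c) (flW m W) (alt_altW _ _) (by
        intro hcontra
        have := congrArg List.length hcontra
        simp at this
        omega)
      simpa using this
    rw [if_neg (by omega)]
    rw [Prod.mk.injEq]
    refine ⟨by omega, ?_⟩
    have hdrop : (altW (m-1) (!c) ++ flW m W).drop (m-1) = flW m W :=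
      List.drop_left' (by simp)
    rw [hdrop, flW_flW]


/-! ### Chunk 3b: the master Delta-shift lemma -/

/-- append a positive word to a normal form, one letter at a time -/
def appW (m : ℕ) (L : List Bool) (z : ℤ × List Bool) : ℤ × List Bool :=
  L.foldl (fun z c => fwdZ m c z) z

@[simp] lemma appW_nil (m : ℕ) (z : ℤ × List Bool) : appW m [] z = z := rfl

lemma appW_append (m : ℕ) (L1 L2 : List Bool) (z : ℤ × List Bool) :
    appW m (L1 ++ L2) z = appW m L2 (appW m L1 z) := by
  simp [appW, List.foldl_append]

lemma appW_snoc (m : ℕ) (L : List Bool) (c : Bool) (z : ℤ × List Bool) :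
    appW m (L ++ [c]) z = fwdZ m c (appW m L z) := by
  rw [appW_append]
  rfl

lemma reverse_altW_cons (j : ℕ) (c : Bool) :
    (altW (j+1) c).reverse = altL j c :: (altW j c).reverse := by
  rw [altW_succ_snoc]
  simp

lemma getLast?_reverse' (l : List Bool) : l.reverse.getLast? = l.head? := by
  cases l with
  | nil => rfl
  | cons x xs => simp

lemma head?_reverse' (l : List Bool) : l.reverse.head? = l.getLast? := by
  rw [← List.reverse_reverse l]
  rw [List.reverse_reverse]
  rw [← getLast?_reverse' l.reverse, List.reverse_reverse]

lemma run_break (W : List Bool) (e : Bool) (he : (W.drop (runL W)).head? = some e) :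
    (W.take (runL W)).getLast? = some e := by
  have hne : W ≠ [] := by
    intro hcontra
    subst hcontra
    simp at he
  have hρ : 1 ≤ runL W := runL_pos W hne
  have htake_ne : W.take (runL W) ≠ [] := by
    intro hcontra
    have h0 := congrArg List.length hcontra
    rw [List.length_take, min_eq_left (runL_le_length W)] at h0
    simp at h0
    omega
  cases hg : (W.take (runL W)).getLast? with
  | none => exact absurd (List.getLast?_eq_none_iff.mp hg) htake_ne
  | some g =>
    by_cases hge : g = e
    · rw [hge]
    · exfalso
      have heg : e = !g := by revert hge; cases e <;> cases g <;> simp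
      have hlen : (W.take (runL W)).length = runL W := by
        have := runL_le_length W
        simp
        omega
      have hext := runL_append_ext (W.take (runL W)) (W.drop (runL W)) g
        (alt_take_runL W) hg (by rw [he, heg])
      rw [List.take_append_drop] at hext
      have hpos : 0 < runL (W.drop (runL W)) := runL_pos _ (by
        intro hcontra
        rw [hcontra] at he
        simp at he)
      omega

lemma drop_altW (j n : ℕ) (c : Bool) : (altW n c).drop j = altW (n - j) (altL j c) := by
  induction j generalizing n c with
  | zero => simp
  | succ j ih =>
    cases n with
    | zero => simp
    | succ n =>
      have : (altW (n+1) c).drop (j+1) = (altW n (!c)).drop j := by simp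
      rw [this, ih n (!c), altL_succ]
      congr 1
      omega

lemma parity1 (m ρ : ℕ) (hm : 3 ≤ m) (h1 : 1 ≤ ρ) (h2 : ρ ≤ m - 1) (c : Bool) :
    flL m (altL (ρ-1) (!c)) = altL (m-ρ) c := by
  by_cases hp : m % 2 = 0 <;> by_cases hq : ρ % 2 = 0
  · have e1 : (ρ-1) % 2 = 1 := by omega
    have e2 : (m-ρ) % 2 = 0 := by omega
    simp [altL, flL, hp, e1, e2]
  · have e1 : (ρ-1) % 2 = 0 := by omega
    have e2 : (m-ρ) % 2 = 1 := by omega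
    simp [altL, flL, hp, e1, e2]
  · have e1 : (ρ-1) % 2 = 1 := by omega
    have e2 : (m-ρ) % 2 = 1 := by omega
    simp [altL, flL, hp, e1, e2]
  · have e1 : (ρ-1) % 2 = 0 := by omega
    have e2 : (m-ρ) % 2 = 0 := by omega
    simp [altL, flL, hp, e1, e2]

lemma parity2 (m ρ : ℕ) (hm : 3 ≤ m) (h1 : 1 ≤ ρ) (h2 : ρ ≤ m - 1) (c : Bool) :
    altL (ρ-1) (altL (m-ρ) c) = flL m (!c) := by
  by_cases hp : m % 2 = 0 <;> by_cases hq : ρ % 2 = 0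
  · have e1 : (ρ-1) % 2 = 1 := by omega
    have e2 : (m-ρ) % 2 = 0 := by omega
    simp [altL, flL, hp, e1, e2]
  · have e1 : (ρ-1) % 2 = 0 := by omega
    have e2 : (m-ρ) % 2 = 1 := by omega
    simp [altL, flL, hp, e1, e2]
  · have e1 : (ρ-1) % 2 = 1 := by omega
    have e2 : (m-ρ) % 2 = 1 := by omega
    simp [altL, flL, hp, e1, e2]
  · have e1 : (ρ-1) % 2 = 0 := by omega
    have e2 : (m-ρ) % 2 = 0 := by omega
    simp [altL, flL, hp, e1, e2]

lemma altW_reverse_ne_nil (j : ℕ) (c : Bool) (hj : 1 ≤ j) : (altW j c).reverse ≠ [] := by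
  intro hcontra
  have := congrArg List.length hcontra
  simp at this
  omega

lemma getLast?_reverse_altW (j : ℕ) (c : Bool) (hj : 1 ≤ j) :
    ((altW j c).reverse).getLast? = some c := by
  rw [getLast?_reverse', altW_head? j c (by omega)]

lemma growth_blocked (m : ℕ) (hm : 3 ≤ m) (c : Bool) (k : ℤ) (W : List Bool)
    (hblock : W.head? ≠ some (!c)) :
    ∀ j, j ≤ m - 1 → appW m (altW j c) (k, W) = (k, (altW j c).reverse ++ W) := by
  intro j
  induction j with
  | zero => intro _; simp
  | succ j ih =>
    intro hj
    rw [altW_succ_snoc, appW_snoc, ih (by omega)]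
    have hrun : runL ((altW (j+1) c).reverse ++ W) = j + 1 := by
      cases hWc : W with
      | nil =>
        rw [List.append_nil, alt_runL_eq_length _ (alt_reverse _ (alt_altW _ _))]
        simp
      | cons e W' =>
        have he : c = e := by
          by_contra hne
          apply hblock
          rw [hWc]
          have h6 : e = !c := by revert hne; cases e <;> cases c <;> simp
          simp [h6]
        subst he
        have := runL_append_block ((altW (j+1) c).reverse) (c :: W') c
          (alt_reverse _ (alt_altW _ _)) (getLast?_reverse_altW (j+1) c (by omega))
          (by simp)
        rw [this]
        simp
    rw [fwdZ]
    dsimp only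
    have hcond : runL (altL j c :: ((altW j c).reverse ++ W)) < m := by
      have : altL j c :: ((altW j c).reverse ++ W) = (altW (j+1) c).reverse ++ W := by
        rw [reverse_altW_cons]
        rfl
      rw [this, hrun]
      omega
    rw [if_pos hcond]
    simp

lemma master_blocked (m : ℕ) (hm : 3 ≤ m) (c : Bool) (k : ℤ) (W : List Bool)
    (hblock : W.head? ≠ some (!c)) :
    appW m (altW m c) (k, W) = (k+1, flW m W) := by
  have hsnoc := altW_succ_snoc (m-1) c
  rw [show m - 1 + 1 = m by omega] at hsnoc
  rw [hsnoc, appW_snoc, growth_blocked m hm c k W hblock (m-1) (by omega)]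
  rw [fwdZ]
  dsimp only
  have hfull : altL (m-1) c :: ((altW (m-1) c).reverse ++ W) = (altW m c).reverse ++ W := by
    rw [hsnoc]
    simp
  have hge : m ≤ runL (altL (m-1) c :: ((altW (m-1) c).reverse ++ W)) := by
    rw [hfull]
    have := runL_append_ge ((altW m c).reverse) W
      (alt_reverse _ (alt_altW _ _)) (altW_reverse_ne_nil _ _ (by omega))
    simp at this
    omega
  rw [if_neg (by omega)]
  have hdrop : ((altW (m-1) c).reverse ++ W).drop (m-1) = W :=
    List.drop_left' (by simp)
  rw [hdrop]

lemma head?_take (W : List Bool) (n : ℕ) (hn : 1 ≤ n) : (W.take n).head? = W.head? := by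
  cases W with
  | nil => simp
  | cons x xs =>
    cases n with
    | zero => omega
    | succ k => simp

lemma master_ext (m : ℕ) (hm : 3 ≤ m) (c : Bool) (k : ℤ) (W : List Bool)
    (hW : DFree m W) (hhead : W.head? = some (!c)) :
    appW m (altW m c) (k, W) = (k+1, flW m W) := by
  set ρ := runL W with hρdef
  have hWne : W ≠ [] := by
    intro hcontra
    rw [hcontra] at hhead
    simp at hhead
  have hρ1 : 1 ≤ ρ := runL_pos W hWne
  have hρm : ρ ≤ m - 1 := by
    have := hW 0
    simp only [List.drop_zero] at this
    omega
  have htake : W.take ρ = altW ρ (!c) := runL_prefix W (!c) hhead ρ (le_refl _)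
  -- growth phase
  have growth : ∀ j, j ≤ m - ρ - 1 → appW m (altW j c) (k, W) = (k, (altW j c).reverse ++ W) := by
    intro j
    induction j with
    | zero => intro _; simp
    | succ j ih =>
      intro hj
      rw [altW_succ_snoc, appW_snoc, ih (by omega)]
      have hrun : runL ((altW (j+1) c).reverse ++ W) = (j + 1) + ρ := by
        have := runL_append_ext ((altW (j+1) c).reverse) W c
          (alt_reverse _ (alt_altW _ _)) (getLast?_reverse_altW (j+1) c (by omega)) hhead
        rw [this]
        simp [hρdef]
      rw [fwdZ]
      dsimp only
      have hcond : runL (altL j c :: ((altW j c).reverse ++ W)) < m := by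
        have heq : altL j c :: ((altW j c).reverse ++ W) = (altW (j+1) c).reverse ++ W := by
          rw [reverse_altW_cons]
          rfl
        rw [heq, hrun]
        omega
      rw [if_pos hcond]
      simp
  -- extraction step
  have hsnoc2 := altW_succ_snoc (m-ρ-1) c
  rw [show m - ρ - 1 + 1 = m - ρ by omega] at hsnoc2
  have extract : appW m (altW (m-ρ) c) (k, W) = (k+1, flW m (W.drop ρ)) := by
    rw [hsnoc2, appW_snoc, growth (m-ρ-1) (le_refl _)]
    rw [fwdZ]
    dsimp only
    have hfull : altL (m-ρ-1) c :: ((altW (m-ρ-1) c).reverse ++ W)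
        = (altW (m-ρ) c).reverse ++ W := by
      rw [hsnoc2]
      simp
    have hge : m ≤ runL (altL (m-ρ-1) c :: ((altW (m-ρ-1) c).reverse ++ W)) := by
      rw [hfull]
      have := runL_append_ext ((altW (m-ρ) c).reverse) W c
        (alt_reverse _ (alt_altW _ _)) (getLast?_reverse_altW (m-ρ) c (by omega)) hhead
      rw [this]
      simp only [List.length_reverse, altW_length]
      omega
    rw [if_neg (by omega)]
    have hdrop : (((altW (m-ρ-1) c).reverse) ++ W).drop (m-1) = W.drop ρ := by
      rw [List.drop_append]
      have h1 : ((altW (m-ρ-1) c).reverse).drop (m-1) = [] := by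
        apply List.drop_eq_nil_of_le
        simp
        omega
      have h2 : m - 1 - ((altW (m-ρ-1) c).reverse).length = ρ := by
        simp
        omega
      rw [h1, h2, List.nil_append]
    rw [hdrop]
  -- tail phase
  set c₂ := altL (m-ρ) c with hc₂
  have hsplit : altW m c = altW (m-ρ) c ++ altW ρ c₂ := by
    conv_lhs => rw [← List.take_append_drop (m-ρ) (altW m c)]
    congr 1
    · exact runL_prefix (altW m c) c (altW_head? m c (by omega)) (m-ρ)
        (by rw [alt_runL_eq_length _ (alt_altW _ _)]; simp only [altW_length]; omega)
    · rw [drop_altW]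
      congr 1
      omega
  have hblock2 : (flW m (W.drop ρ)).head? ≠ some (!c₂) := by
    cases hD : W.drop ρ with
    | nil => simp
    | cons e D' =>
      have he : (W.drop ρ).head? = some e := by rw [hD]; rfl
      have hbreak : (W.take ρ).getLast? = some e := run_break W e he
      rw [htake] at hbreak
      have hgl : (altW ρ (!c)).getLast? = some (altL (ρ-1) (!c)) := by
        have h7 : ρ = (ρ-1)+1 := by omega
        rw [h7, altW_getLast?]
        simp
      rw [hgl] at hbreak
      have he2 : e = altL (ρ-1) (!c) := by
        injection hbreak with h'
        exact h'.symm
      simp only [flW_cons, List.head?_cons, Option.some.injEq]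
      rw [he2, parity1 m ρ hm hρ1 hρm c, ← hc₂]
      cases c₂ <;> simp
  rw [hsplit, appW_append, extract,
    growth_blocked m hm c₂ (k+1) (flW m (W.drop ρ)) hblock2 ρ hρm]
  congr 1
  -- identify the final word
  have hrev : (altW ρ c₂).reverse = altW ρ (flL m (!c)) := by
    have halt : Alt ((altW ρ c₂).reverse) := alt_reverse _ (alt_altW _ _)
    have hh : ((altW ρ c₂).reverse).head? = some (altL (ρ-1) c₂) := by
      rw [head?_reverse']
      have h8 : ρ = (ρ-1)+1 := by omega
      rw [h8, altW_getLast?]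
      simp
    have := alt_eq_altW _ halt _ hh
    rw [this]
    simp only [List.length_reverse, altW_length]
    congr 1
    rw [hc₂]
    exact parity2 m ρ hm hρ1 hρm c
  rw [hrev]
  conv_rhs => rw [← List.take_append_drop ρ W, flW_append, htake, flW_altW]

lemma master (m : ℕ) (hm : 3 ≤ m) (c : Bool) (k : ℤ) (W : List Bool) (hW : DFree m W) :
    appW m (altW m c) (k, W) = (k+1, flW m W) := by
  by_cases h : W.head? = some (!c)
  · exact master_ext m hm c k W hW h
  · exact master_blocked m hm c k W h


/-! ### Chunk 4: group theory -/

section Group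


@[simp] lemma altProd_zero {G : Type*} [Monoid G] (x y : G) : altProd 0 x y = 1 := rfl
@[simp] lemma altProd_succ {G : Type*} [Monoid G] (n : ℕ) (x y : G) :
    altProd (n+1) x y = x * altProd n y x := rfl

lemma map_altProd {G H : Type*} [Monoid G] [Monoid H] (f : G →* H) (n : ℕ) (x y : G) :
    f (altProd n x y) = altProd n (f x) (f y) := by
  induction n generalizing x y with
  | zero => simp
  | succ n ih => simp [ih]

lemma altProd_succ_right {G : Type*} [Monoid G] (n : ℕ) (x y : G) :
    altProd (n+1) x y = altProd n x y * (if n % 2 = 0 then x else y) := by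
  induction n generalizing x y with
  | zero => simp
  | succ n ih =>
    rw [altProd_succ, ih y x, altProd_succ, mul_assoc]
    have : (n+1) % 2 = 0 ↔ ¬ (n % 2 = 0) := by omega
    by_cases h : n % 2 = 0
    · rw [if_pos h, if_neg (by omega)]
    · rw [if_neg h, if_pos (by omega)]

lemma altProd_inv {G : Type*} [Group G] (n : ℕ) (x y : G) :
    altProd n x⁻¹ y⁻¹ = (if n % 2 = 0 then altProd n y x else altProd n x y)⁻¹ := by
  induction n generalizing x y with
  | zero => simp
  | succ n ih =>
    rw [altProd_succ, ih y x]
    by_cases h : n % 2 = 0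
    · rw [if_pos h, if_neg (show ¬ (n+1) % 2 = 0 by omega),
        altProd_succ_right n x y, if_pos h, mul_inv_rev]
    · rw [if_neg h, if_pos (show (n+1) % 2 = 0 by omega),
        altProd_succ_right n y x, if_neg h, mul_inv_rev]

lemma altProd_same {G : Type*} [Monoid G] (n : ℕ) (x : G) : altProd n x x = x ^ n := by
  induction n with
  | zero => simp
  | succ n ih => rw [altProd_succ, ih, pow_succ']

variable (m : ℕ)

/-- the generator of `DA m` corresponding to the letter `c` -/
def genL (c : Bool) : DA m := gen 2 (DMat m) (if c then 1 else 0)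

/-- product of the letters of a word -/
def wordP (W : List Bool) : DA m := (W.map (genL m)).prod

@[simp] lemma wordP_nil : wordP m [] = 1 := rfl

@[simp] lemma wordP_cons (c : Bool) (W : List Bool) :
    wordP m (c :: W) = genL m c * wordP m W := by
  simp [wordP]

lemma wordP_append (W V : List Bool) : wordP m (W ++ V) = wordP m W * wordP m V := by
  simp [wordP]

lemma wordP_altW (n : ℕ) (c : Bool) :
    wordP m (altW n c) = altProd n (genL m c) (genL m (!c)) := by
  induction n generalizing c with
  | zero => simp
  | succ n ih =>
    rw [altW_succ, wordP_cons, ih (!c), Bool.not_not, altProd_succ]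

lemma rel_mem : (altProd m (FreeGroup.of (0 : Fin 2)) (FreeGroup.of (1 : Fin 2)) *
    (altProd m (FreeGroup.of (1 : Fin 2)) (FreeGroup.of (0 : Fin 2)))⁻¹) ∈
    artinRels 2 (DMat m) := by
  refine ⟨0, 1, by decide, m, ?_, rfl⟩
  simp [DMat]

lemma presented_rel {α : Type*} (rels : Set (FreeGroup α)) (r : FreeGroup α) (hr : r ∈ rels) :
    PresentedGroup.mk rels r = 1 := by
  have : r ∈ Subgroup.normalClosure rels := Subgroup.subset_normalClosure hr
  exact (QuotientGroup.eq_one_iff r).mpr this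

lemma gen_eq_mk (n : ℕ) (M : Fin n → Fin n → ℕ∞) (i : Fin n) :
    gen n M i = PresentedGroup.mk (artinRels n M) (FreeGroup.of i) := rfl

lemma deltaRel : altProd m (gen 2 (DMat m) 0) (gen 2 (DMat m) 1)
    = altProd m (gen 2 (DMat m) 1) (gen 2 (DMat m) 0) := by
  have h := presented_rel (artinRels 2 (DMat m)) _ (rel_mem m)
  rw [map_mul, map_inv] at h
  rw [map_altProd, map_altProd] at h
  rw [← gen_eq_mk, ← gen_eq_mk] at h
  exact mul_inv_eq_one.mp h

lemma altProd_genL (c : Bool) : altProd m (genL m c) (genL m (!c)) = Delta m := by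
  cases c
  · exact rfl
  · exact (deltaRel m).symm

lemma genL_mul_Delta (c : Bool) : genL m c * Delta m = Delta m * genL m (flL m c) := by
  have h0 : altProd m (genL m (!c)) (genL m c) = Delta m := by
    have h' := altProd_genL m (!c)
    rwa [Bool.not_not] at h'
  have h1 : genL m c * Delta m = altProd (m+1) (genL m c) (genL m (!c)) := by
    rw [altProd_succ, h0]
  rw [h1, altProd_succ_right, altProd_genL]
  congr 1
  by_cases h : m % 2 = 0 <;> simp [flL, h]

lemma wordP_mul_Delta (V : List Bool) :
    wordP m V * Delta m = Delta m * wordP m (flW m V) := by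
  induction V with
  | nil => simp
  | cons c V' ih =>
    rw [wordP_cons, mul_assoc, ih, ← mul_assoc, genL_mul_Delta, flW_cons, wordP_cons,
      mul_assoc]

/-- the normal-form interpretation map -/
noncomputable def psi (z : ℤ × List Bool) : DA m := (Delta m) ^ z.1 * wordP m z.2.reverse

lemma wordP_rev_deltaWord (c : Bool) (hm : 1 ≤ m) :
    wordP m ((altW (m-1) (!c)).reverse ++ [c]) = Delta m := by
  have h1 : (altW (m-1) (!c)).reverse ++ [c] = (altW m c).reverse := by
    have : altW m c = c :: altW (m-1) (!c) := by
      cases hm' : m with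
      | zero => omega
      | succ j => simp [hm']
    rw [this]
    simp
  rw [h1]
  have h2 : (altW m c).reverse = altW m (altL (m-1) c) := by
    have halt : Alt ((altW m c).reverse) := alt_reverse _ (alt_altW _ _)
    have hh : ((altW m c).reverse).head? = some (altL (m-1) c) := by
      rw [head?_reverse']
      have : m = (m-1)+1 := by omega
      rw [this, altW_getLast?]
      simp
    have := alt_eq_altW _ halt _ hh
    rw [this]
    simp
  rw [h2, wordP_altW, altProd_genL]

lemma psi_fwd (hm : 3 ≤ m) (c : Bool) (z : ℤ × List Bool) :
    psi m (fwdZ m c z) = psi m z * genL m c := by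
  obtain ⟨k, W⟩ := z
  by_cases h : runL (c :: W) < m
  · rw [fwdZ, if_pos h]
    simp only [psi, List.reverse_cons]
    rw [wordP_append, ← mul_assoc]
    simp
  · rw [fwdZ, if_neg h]
    simp only [psi]
    have hsplit : W = altW (m-1) (!c) ++ W.drop (m-1) := by
      conv_lhs => rw [← List.take_append_drop (m-1) W]
      rw [extract_structure m hm c W h]
    calc (Delta m)^(k+1) * wordP m (flW m (W.drop (m-1))).reverse
        = (Delta m)^k * (Delta m * wordP m (flW m ((W.drop (m-1)).reverse))) := by
          rw [zpow_add_one, mul_assoc]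
          congr 2
          rw [flW, flW, List.map_reverse]
      _ = (Delta m)^k * (wordP m ((W.drop (m-1)).reverse) * Delta m) := by
          rw [wordP_mul_Delta]
      _ = (Delta m)^k * (wordP m ((W.drop (m-1)).reverse) *
            wordP m ((altW (m-1) (!c)).reverse ++ [c])) := by
          rw [wordP_rev_deltaWord m c (by omega)]
      _ = (Delta m)^k * wordP m (W.reverse ++ [c]) := by
          congr 1
          rw [← wordP_append]
          congr 1
          conv_rhs => rw [hsplit]
          simp
      _ = (Delta m)^k * wordP m W.reverse * genL m c := by
          rw [wordP_append, ← mul_assoc]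
          simp [wordP]

lemma psi_bwd (hm : 3 ≤ m) (c : Bool) (z : ℤ × List Bool) :
    psi m (bwdZ m c z) = psi m z * (genL m c)⁻¹ := by
  obtain ⟨k, W⟩ := z
  rw [eq_mul_inv_iff_mul_eq]
  by_cases h : W.head? = some c
  · rw [bwdZ, if_pos h]
    cases W with
    | nil => simp at h
    | cons d W' =>
      have hd : d = c := by simpa using h
      subst hd
      simp only [psi, List.tail_cons, List.reverse_cons]
      rw [mul_assoc]
      congr 1
      rw [wordP_append]
      simp [wordP]
  · rw [bwdZ, if_neg h]
    simp only [psi]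
    calc (Delta m)^(k-1) * wordP m ((altW (m-1) (!c) ++ flW m W).reverse) * genL m c
        = (Delta m)^(k-1) * (wordP m ((flW m W).reverse) *
            (wordP m ((altW (m-1) (!c)).reverse) * genL m c)) := by
          rw [List.reverse_append, wordP_append, mul_assoc, mul_assoc]
      _ = (Delta m)^(k-1) * (wordP m ((flW m W).reverse) * Delta m) := by
          rw [← wordP_rev_deltaWord m c (by omega), wordP_append]
          simp [wordP]
      _ = (Delta m)^(k-1) * (Delta m * wordP m (flW m ((flW m W).reverse))) := by
          rw [wordP_mul_Delta]
      _ = (Delta m)^k * wordP m W.reverse := by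
          rw [← mul_assoc, ← zpow_add_one]
          congr 2
          · omega
          · rw [flW, flW, List.map_reverse, List.map_map]
            congr 1
            have : (flL m ∘ flL m) = id := by
              funext x; simp [Function.comp, flL_flL]
            rw [this, List.map_id]


/-! the permutation model -/

def ZS := {z : ℤ × List Bool // DFree m z.2}

lemma fwd_dfree (c : Bool) (z : ℤ × List Bool) (hz : DFree m z.2) :
    DFree m (fwdZ m c z).2 := by
  rw [fwdZ]
  by_cases h : runL (c :: z.2) < m
  · rw [if_pos h]
    exact (dfree_cons m c z.2).mpr ⟨h, hz⟩
  · rw [if_neg h]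
    exact dfree_flW m _ (dfree_suffix m _ _ (List.drop_suffix _ _) hz)

lemma bwd_dfree' (hm : 3 ≤ m) (c : Bool) (z : ℤ × List Bool) (hz : DFree m z.2) :
    DFree m (bwdZ m c z).2 := by
  rw [bwdZ]
  by_cases h : z.2.head? = some c
  · rw [if_pos h]
    exact dfree_suffix m _ _ (List.tail_suffix _) hz
  · rw [if_neg h]
    exact bwd_dfree m hm c z.2 hz h

/-- right multiplication by the letter `c`, as a permutation of normal forms -/
def pm (hm : 3 ≤ m) (c : Bool) : Equiv.Perm (ZS m) where
  toFun z := ⟨fwdZ m c z.val, fwd_dfree m c z.val z.prop⟩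
  invFun z := ⟨bwdZ m c z.val, bwd_dfree' m hm c z.val z.prop⟩
  left_inv z := Subtype.ext (by
    obtain ⟨⟨k, W⟩, hW⟩ := z
    exact bwd_fwd m hm c k W hW)
  right_inv z := Subtype.ext (by
    obtain ⟨⟨k, W⟩, hW⟩ := z
    exact fwd_bwd m hm c k W hW)

lemma pm_apply (hm : 3 ≤ m) (c : Bool) (z : ZS m) :
    ((pm m hm c) z).val = fwdZ m c z.val := rfl

lemma pm_inv_apply (hm : 3 ≤ m) (c : Bool) (z : ZS m) :
    ((pm m hm c)⁻¹ z).val = bwdZ m c z.val := rfl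

def toB (i : Fin 2) : Bool := decide (i = 1)

lemma toB_idx (c : Bool) : toB (if c then 1 else 0) = c := by
  cases c <;> rfl

lemma genL_toB (i : Fin 2) : genL m (toB i) = gen 2 (DMat m) i := by
  fin_cases i <;> rfl

def FgenP (hm : 3 ≤ m) : Fin 2 → Equiv.Perm (ZS m) := fun i => (pm m hm (toB i))⁻¹

lemma perm_altProd_apply (hm : 3 ≤ m) (n : ℕ) (c : Bool) (z : ZS m) :
    ((altProd n (pm m hm c) (pm m hm (!c))) z).val
      = appW m (altW n c).reverse z.val := by
  induction n generalizing c z with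
  | zero => rfl
  | succ n ih =>
    calc ((altProd (n+1) (pm m hm c) (pm m hm (!c))) z).val
        = ((pm m hm c) ((altProd n (pm m hm (!c)) (pm m hm c)) z)).val := by
          rw [altProd_succ, Equiv.Perm.mul_apply]
      _ = fwdZ m c ((altProd n (pm m hm (!c)) (pm m hm c)) z).val := rfl
      _ = fwdZ m c (appW m (altW n (!c)).reverse z.val) := by
          have h' := ih (!c) z
          rw [Bool.not_not] at h'
          rw [h']
      _ = appW m ((altW n (!c)).reverse ++ [c]) z.val := (appW_snoc m _ c z.val).symm
      _ = appW m ((altW (n+1) c).reverse) z.val := by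
          rw [altW_succ]
          simp

lemma reverse_altW_eq (n : ℕ) (hn : 1 ≤ n) (c : Bool) :
    (altW n c).reverse = altW n (altL (n-1) c) := by
  have halt : Alt ((altW n c).reverse) := alt_reverse _ (alt_altW _ _)
  have hh : ((altW n c).reverse).head? = some (altL (n-1) c) := by
    rw [head?_reverse']
    have : n = (n-1)+1 := by omega
    rw [this, altW_getLast?]
    simp
  have := alt_eq_altW _ halt _ hh
  rw [this]
  simp

lemma pm_braid (hm : 3 ≤ m) (c : Bool) :
    altProd m (pm m hm c) (pm m hm (!c)) = altProd m (pm m hm (!c)) (pm m hm c) := by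
  apply Equiv.ext
  intro z
  apply Subtype.ext
  have h2 := perm_altProd_apply m hm m (!c) z
  rw [Bool.not_not] at h2
  rw [perm_altProd_apply m hm m c z, h2]
  rw [reverse_altW_eq m (by omega) c, reverse_altW_eq m (by omega) (!c)]
  obtain ⟨⟨k, W⟩, hW⟩ := z
  rw [master m hm _ k W hW, master m hm _ k W hW]

lemma relcheckP (hm : 3 ≤ m) :
    ∀ r ∈ artinRels 2 (DMat m), FreeGroup.lift (FgenP m hm) r = 1 := by
  rintro r ⟨i, j, hij, mm, hM, rfl⟩
  have hmm : mm = m := by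
    have h1 : (DMat m i j) = (m : ℕ∞) := by simp [DMat, hij]
    rw [hM] at h1
    exact_mod_cast h1
  subst hmm
  rw [map_mul, map_inv, map_altProd, map_altProd]
  have hj : toB j = !(toB i) := by
    fin_cases i <;> fin_cases j <;> simp_all [toB]
  simp only [FreeGroup.lift_apply_of, FgenP]
  rw [hj, mul_inv_eq_one, altProd_inv, altProd_inv]
  have hb := pm_braid mm hm (toB i)
  by_cases h : mm % 2 = 0
  · rw [if_pos h, if_pos h, hb]
  · rw [if_neg h, if_neg h, hb]

/-- the action of `DA m` on normal forms -/
noncomputable def Phi (hm : 3 ≤ m) : DA m →* Equiv.Perm (ZS m) :=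
  PresentedGroup.toGroup (relcheckP m hm)

def baseZ (hm : 3 ≤ m) : ZS m := ⟨(0, []), dfree_nil m (by omega)⟩

/-- the normal form of a group element -/
noncomputable def nu (hm : 3 ≤ m) (g : DA m) : ℤ × List Bool :=
  ((Phi m hm g⁻¹) (baseZ m hm)).val

lemma Phi_gen (hm : 3 ≤ m) (i : Fin 2) :
    Phi m hm (gen 2 (DMat m) i) = (pm m hm (toB i))⁻¹ :=
  PresentedGroup.toGroup.of (relcheckP m hm)

lemma Phi_genL (hm : 3 ≤ m) (c : Bool) : Phi m hm (genL m c) = (pm m hm c)⁻¹ := by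
  rw [genL, Phi_gen, toB_idx]

lemma nu_mul_genL (hm : 3 ≤ m) (g : DA m) (c : Bool) :
    nu m hm (g * genL m c) = fwdZ m c (nu m hm g) := by
  simp only [nu, mul_inv_rev, map_mul, Equiv.Perm.mul_apply, map_inv, Phi_genL, inv_inv]
  rfl

lemma nu_mul_genL_inv (hm : 3 ≤ m) (g : DA m) (c : Bool) :
    nu m hm (g * (genL m c)⁻¹) = bwdZ m c (nu m hm g) := by
  simp only [nu, mul_inv_rev, inv_inv, map_mul, Equiv.Perm.mul_apply, Phi_genL]
  rfl

lemma psi_Phi (hm : 3 ≤ m) (g : DA m) :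
    ∀ z : ZS m, psi m ((Phi m hm g) z).val = psi m z.val * g⁻¹ := by
  refine PresentedGroup.induction_on
    (C := fun g => ∀ z : ZS m, psi m ((Phi m hm g) z).val = psi m z.val * g⁻¹) g ?_
  intro w
  induction w using FreeGroup.induction_on with
  | C1 =>
    intro z
    rw [map_one, map_one]
    simp
  | of i =>
    intro z
    have hpo : (pure i : FreeGroup (Fin 2)) = FreeGroup.of i := rfl
    have h1 : Phi m hm (PresentedGroup.mk (artinRels 2 (DMat m)) (FreeGroup.of i))
        = (pm m hm (toB i))⁻¹ := Phi_gen m hm i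
    rw [h1, pm_inv_apply, psi_bwd m hm, genL_toB]
    rfl
  | inv_of i ih =>
    intro z
    have hpo : (pure i : FreeGroup (Fin 2)) = FreeGroup.of i := rfl
    rw [map_inv, map_inv, inv_inv]
    set x := PresentedGroup.mk (artinRels 2 (DMat m)) (FreeGroup.of i) with hx
    have h2 := ih ((Phi m hm x)⁻¹ z)
    rw [show (Phi m hm x) ((Phi m hm x)⁻¹ z) = z from Equiv.apply_symm_apply _ _] at h2
    rw [eq_mul_inv_iff_mul_eq] at h2
    exact h2.symm
  | mul w1 w2 ih1 ih2 =>
    intro z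
    rw [map_mul, map_mul, Equiv.Perm.mul_apply]
    rw [ih1, ih2, mul_inv_rev, mul_assoc]

lemma psi_nu (hm : 3 ≤ m) (g : DA m) : psi m (nu m hm g) = g := by
  have h := psi_Phi m hm g⁻¹ (baseZ m hm)
  rw [inv_inv] at h
  have hbase : psi m (baseZ m hm).val = 1 := by
    simp [psi, baseZ]
  rw [nu, h, hbase, one_mul]

end Group

/-! ### Chunk 5: length and positivity -/



section Length

variable (m : ℕ)

lemma relcheckL :
    ∀ r ∈ artinRels 2 (DMat m),
      FreeGroup.lift (fun _ : Fin 2 => Multiplicative.ofAdd (1:ℤ)) r = 1 := by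
  rintro r ⟨i, j, hij, mm, hM, rfl⟩
  rw [map_mul, map_inv, map_altProd, map_altProd]
  simp only [FreeGroup.lift_apply_of]
  simp

/-- the length homomorphism -/
noncomputable def lenH : DA m →* Multiplicative ℤ := PresentedGroup.toGroup (relcheckL m)

noncomputable def lenZ (g : DA m) : ℤ := Multiplicative.toAdd (lenH m g)

lemma lenZ_one : lenZ m 1 = 0 := by simp [lenZ]

lemma lenZ_mul (g h : DA m) : lenZ m (g * h) = lenZ m g + lenZ m h := by
  simp [lenZ]

lemma lenZ_inv (g : DA m) : lenZ m g⁻¹ = - lenZ m g := by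
  simp [lenZ]

lemma lenZ_gen (i : Fin 2) : lenZ m (gen 2 (DMat m) i) = 1 := by
  have : lenH m (gen 2 (DMat m) i) = Multiplicative.ofAdd (1:ℤ) :=
    PresentedGroup.toGroup.of (relcheckL m)
  simp [lenZ, this]

lemma lenZ_genL (c : Bool) : lenZ m (genL m c) = 1 := lenZ_gen m _

lemma lenZ_wordP (W : List Bool) : lenZ m (wordP m W) = W.length := by
  induction W with
  | nil => simp [lenZ_one]
  | cons c W' ih =>
    rw [wordP_cons, lenZ_mul, lenZ_genL, ih]
    simp
    omega

lemma Delta_eq_wordP : Delta m = wordP m (altW m false) := by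
  rw [wordP_altW]
  rfl

lemma lenZ_Delta : lenZ m (Delta m) = m := by
  rw [Delta_eq_wordP, lenZ_wordP]
  simp

lemma lenZ_Delta_pow (k : ℕ) : lenZ m (Delta m ^ k) = k * m := by
  induction k with
  | zero => simp [lenZ_one]
  | succ k ih =>
    rw [pow_succ, lenZ_mul, ih, lenZ_Delta]
    push_cast
    ring

lemma genL_mem_genSet (c : Bool) : genL m c ∈ genSet 2 (DMat m) :=
  ⟨if c then 1 else 0, Or.inl rfl⟩

lemma exists_genSet_word (g : DA m) :
    ∃ w : List (DA m), (∀ a ∈ w, a ∈ genSet 2 (DMat m)) ∧ w.prod = g := by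
  have hsymm : ∀ a : DA m, a ∈ genSet 2 (DMat m) → a⁻¹ ∈ genSet 2 (DMat m) := by
    rintro a ⟨i, h | h⟩
    · exact ⟨i, Or.inr (by rw [h])⟩
    · exact ⟨i, Or.inl (by rw [h, inv_inv])⟩
  set H : Subgroup (DA m) :=
    { carrier := {g | ∃ w : List (DA m), (∀ a ∈ w, a ∈ genSet 2 (DMat m)) ∧ w.prod = g}
      one_mem' := ⟨[], by simp, rfl⟩
      mul_mem' := by
        rintro a b ⟨w1, h1, rfl⟩ ⟨w2, h2, rfl⟩
        exact ⟨w1 ++ w2, by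
          intro x hx
          rcases List.mem_append.mp hx with h | h
          · exact h1 x h
          · exact h2 x h, by rw [List.prod_append]⟩
      inv_mem' := by
        rintro a ⟨w, h1, rfl⟩
        refine ⟨(w.map Inv.inv).reverse, ?_, ?_⟩
        · intro x hx
          rw [List.mem_reverse, List.mem_map] at hx
          rcases hx with ⟨y, hy, rfl⟩
          exact hsymm y (h1 y hy)
        · rw [← List.prod_inv_reverse] } with hH
  have htop : H = ⊤ := by
    rw [← PresentedGroup.closure_range_of (artinRels 2 (DMat m))]
    apply le_antisymm
    · exact le_top.trans (le_of_eq (PresentedGroup.closure_range_of _).symm)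
    · apply Subgroup.closure_le H |>.mpr
      rintro x ⟨i, rfl⟩
      exact ⟨[gen 2 (DMat m) i], by
        intro a ha
        simp at ha
        subst ha
        exact ⟨i, Or.inl rfl⟩, by rw [List.prod_singleton]; rfl⟩
  have : g ∈ H := by rw [htop]; trivial
  exact this

lemma lenZ_letter_bound (a : DA m) (ha : a ∈ genSet 2 (DMat m)) :
    lenZ m a = 1 ∨ lenZ m a = -1 := by
  rcases ha with ⟨i, h | h⟩
  · left; rw [h, lenZ_gen]
  · right; rw [h, lenZ_inv, lenZ_gen]

lemma lenZ_prod_bound (w : List (DA m)) (hw : ∀ a ∈ w, a ∈ genSet 2 (DMat m)) :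
    lenZ m w.prod ≤ w.length ∧ -(w.length : ℤ) ≤ lenZ m w.prod := by
  induction w with
  | nil => simp [lenZ_one]
  | cons a w' ih =>
    have h1 := lenZ_letter_bound m a (hw a (by simp))
    have h2 := ih (fun x hx => hw x (by simp [hx]))
    rw [List.prod_cons, lenZ_mul]
    simp only [List.length_cons]
    rcases h1 with h1 | h1 <;> rw [h1] <;> constructor <;> push_cast <;> omega

lemma wordLength_le_of_wordP (g : DA m) (W : List Bool) (h : wordP m W = g) :
    wordLength (genSet 2 (DMat m)) g ≤ W.length := by
  apply Nat.sInf_le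
  exact ⟨W.map (genL m), by
    intro a ha
    rw [List.mem_map] at ha
    rcases ha with ⟨c, _, rfl⟩
    exact genL_mem_genSet m c, by simp, h⟩

lemma wordLength_witness (g : DA m) :
    ∃ w : List (DA m), (∀ a ∈ w, a ∈ genSet 2 (DMat m)) ∧
      w.length = wordLength (genSet 2 (DMat m)) g ∧ w.prod = g := by
  have hne : {N : ℕ | ∃ w : List (DA m), (∀ a ∈ w, a ∈ genSet 2 (DMat m)) ∧
      w.length = N ∧ w.prod = g}.Nonempty := by
    rcases exists_genSet_word m g with ⟨w, h1, h2⟩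
    exact ⟨w.length, w, h1, rfl, h2⟩
  have := Nat.sInf_mem hne
  rcases this with ⟨w, h1, h2, h3⟩
  exact ⟨w, h1, h2, h3⟩

lemma lenZ_le_wordLength (g : DA m) :
    lenZ m g ≤ (wordLength (genSet 2 (DMat m)) g : ℤ) := by
  rcases wordLength_witness m g with ⟨w, h1, h2, h3⟩
  have := (lenZ_prod_bound m w h1).1
  rw [h3, h2] at this
  exact this

lemma wordLength_eq_lenZ_of_wordP (W : List Bool) :
    (wordLength (genSet 2 (DMat m)) (wordP m W) : ℤ) = lenZ m (wordP m W) := by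
  have h1 := wordLength_le_of_wordP m (wordP m W) W rfl
  have h2 := lenZ_le_wordLength m (wordP m W)
  rw [lenZ_wordP]
  have : (wordLength (genSet 2 (DMat m)) (wordP m W) : ℤ) ≤ W.length := by exact_mod_cast h1
  rw [lenZ_wordP] at h2
  omega

lemma posElt_wordP (W : List Bool) : posElt m (wordP m W) := by
  induction W with
  | nil => exact Submonoid.one_mem _
  | cons c W' ih =>
    rw [wordP_cons]
    apply Submonoid.mul_mem
    · apply Submonoid.subset_closure
      cases c
      · left; rfl
      · right; rfl
    · exact ih

lemma posElt_iff (g : DA m) : posElt m g ↔ ∃ W, wordP m W = g := by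
  constructor
  · intro h
    refine Submonoid.closure_induction ?_ ?_ ?_ h
    · rintro x (rfl | rfl)
      · exact ⟨[false], by simp [wordP, genL]⟩
      · exact ⟨[true], by simp [wordP, genL]⟩
    · exact ⟨[], rfl⟩
    · rintro x y _ _ ⟨W1, rfl⟩ ⟨W2, rfl⟩
      exact ⟨W1 ++ W2, wordP_append m W1 W2⟩
  · rintro ⟨W, rfl⟩
    exact posElt_wordP m W

lemma wordLength_eq_lenZ_of_pos (g : DA m) (h : posElt m g) :
    (wordLength (genSet 2 (DMat m)) g : ℤ) = lenZ m g := by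
  rcases (posElt_iff m g).mp h with ⟨W, rfl⟩
  exact wordLength_eq_lenZ_of_wordP m W

lemma pos_of_lenZ_eq (g : DA m)
    (h : (wordLength (genSet 2 (DMat m)) g : ℤ) = lenZ m g) : posElt m g := by
  rcases wordLength_witness m g with ⟨w, h1, h2, h3⟩
  have key : ∀ w : List (DA m), (∀ a ∈ w, a ∈ genSet 2 (DMat m)) →
      lenZ m w.prod = w.length → posElt m w.prod := by
    intro w
    induction w with
    | nil => intro _ _; exact Submonoid.one_mem _
    | cons a w' ih =>
      intro hl heq
      have h1 := lenZ_letter_bound m a (hl a (by simp))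
      have h2 := lenZ_prod_bound m w' (fun x hx => hl x (by simp [hx]))
      rw [List.prod_cons, lenZ_mul] at heq
      simp only [List.length_cons] at heq
      have ha1 : lenZ m a = 1 := by
        rcases h1 with h1 | h1
        · exact h1
        · exfalso; push_cast at heq; omega
      have hw' : lenZ m w'.prod = w'.length := by push_cast at heq ⊢; omega
      rw [List.prod_cons]
      apply Submonoid.mul_mem
      · rcases hl a (by simp) with ⟨i, hi | hi⟩
        · subst hi
          apply Submonoid.subset_closure
          fin_cases i
          · left; rfl
          · right; rfl
        · exfalso
          rw [hi, lenZ_inv, lenZ_gen] at ha1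
          omega
      · exact ih (fun x hx => hl x (by simp [hx])) hw'
  have : lenZ m w.prod = w.length := by
    rw [h3, h2, ← h]
  rw [← h3]
  exact key w h1 this

end Length

/-! ### Chunk 6: peeling combinatorics and the counting theorem -/

section Count

variable (m : ℕ)

lemma fwd_k_ge (c : Bool) (z : ℤ × List Bool) : z.1 ≤ (fwdZ m c z).1 := by
  rw [fwdZ]
  split <;> simp <;> omega

lemma bwd_k_le (c : Bool) (z : ℤ × List Bool) : (bwdZ m c z).1 ≤ z.1 := by
  rw [bwdZ]
  split <;> simp <;> omega

lemma bwd_iter_k_le (c : Bool) (n : ℕ) (z : ℤ × List Bool) :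
    ((bwdZ m c)^[n] z).1 ≤ z.1 := by
  induction n with
  | zero => simp
  | succ n ih =>
    rw [Function.iterate_succ_apply']
    exact le_trans (bwd_k_le m c _) ih

/-- length of the constant-`bl` prefix -/
def hcnt (bl : Bool) : List Bool → ℕ
  | [] => 0
  | c :: w => if c = bl then hcnt bl w + 1 else 0

lemma hcnt_head (bl : Bool) (W : List Bool) (t : ℕ) (h : t < hcnt bl W) :
    (W.drop t).head? = some bl := by
  induction W generalizing t with
  | nil => simp [hcnt] at h
  | cons c w ih =>
    by_cases hc : c = bl
    · cases t with
      | zero => simp [hc]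
      | succ t' =>
        have h' : t' < hcnt bl w := by
          simp [hcnt, hc] at h
          omega
        have := ih t' h'
        simpa using this
    · simp [hcnt, hc] at h

lemma hcnt_drop (bl : Bool) (W : List Bool) :
    ¬ (W.drop (hcnt bl W)).head? = some bl := by
  induction W with
  | nil => simp
  | cons c w ih =>
    by_cases hc : c = bl
    · subst hc
      simp only [hcnt, if_pos rfl]
      simpa using ih
    · simp only [hcnt, if_neg hc, List.drop_zero, List.head?_cons]
      intro hcontra
      exact hc (by simpa using hcontra)

lemma bwd_iter_within (bl : Bool) (k : ℤ) (W : List Bool) :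
    ∀ t, t ≤ hcnt bl W → (bwdZ m bl)^[t] (k, W) = (k, W.drop t) := by
  intro t
  induction t with
  | zero => intro _; simp
  | succ t ih =>
    intro ht
    rw [Function.iterate_succ_apply', ih (by omega)]
    rw [bwdZ, if_pos (hcnt_head bl W t (by omega))]
    simp only
    rw [List.tail_drop]

lemma bwd_noB (bl : Bool) (hm : 3 ≤ m) (z : ℤ × List Bool)
    (h : ¬ z.2.head? = some bl) :
    (bwdZ m bl z).1 = z.1 - 1 ∧ ¬ ((bwdZ m bl z).2.head? = some bl) := by
  rw [bwdZ, if_neg h]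
  refine ⟨rfl, ?_⟩
  have hm2 : m - 1 = (m-2)+1 := by omega
  rw [hm2, altW_succ]
  simp only [List.cons_append, List.head?_cons]
  intro hcontra
  have : (!bl) = bl := by simpa using hcontra
  simp at this

lemma bwd_iter_noB (bl : Bool) (hm : 3 ≤ m) (z : ℤ × List Bool)
    (h : ¬ z.2.head? = some bl) (i : ℕ) :
    ((bwdZ m bl)^[i] z).1 = z.1 - i ∧ ¬ (((bwdZ m bl)^[i] z).2.head? = some bl) := by
  induction i with
  | zero => simpa using h
  | succ i ih =>
    rw [Function.iterate_succ_apply']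
    have h2 := bwd_noB m bl hm _ ih.2
    refine ⟨?_, h2.2⟩
    rw [h2.1, ih.1]
    push_cast
    ring

lemma b_phase (bl : Bool) (hm : 3 ≤ m) (k : ℤ) (W : List Bool) (t : ℕ)
    (ht : hcnt bl W ≤ t) :
    ((bwdZ m bl)^[t] (k, W)).1 = k + (hcnt bl W : ℤ) - t ∧
    ¬ (((bwdZ m bl)^[t] (k, W)).2.head? = some bl) := by
  have hsplit : t = (t - hcnt bl W) + hcnt bl W := by omega
  rw [hsplit, Function.iterate_add_apply,
    bwd_iter_within m bl k W (hcnt bl W) (le_refl _)]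
  have hnb : ¬ ((k, W.drop (hcnt bl W)).2.head? = some bl) := hcnt_drop bl W
  have h2 := bwd_iter_noB m bl hm _ hnb (t - hcnt bl W)
  refine ⟨?_, h2.2⟩
  rw [h2.1]
  simp only
  push_cast
  omega

lemma bwd_hasB (al : Bool) (hm : 3 ≤ m) (z : ℤ × List Bool)
    (h : z.2.head? = some (!al)) :
    (bwdZ m al z).1 = z.1 - 1 ∧ (bwdZ m al z).2.head? = some (!al) := by
  have hne : ¬ z.2.head? = some al := by
    rw [h]
    intro hcontra
    have : (!al) = al := by simpa using hcontra
    simp at this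
  rw [bwdZ, if_neg hne]
  refine ⟨rfl, ?_⟩
  have hm2 : m - 1 = (m-2)+1 := by omega
  rw [hm2, altW_succ]
  simp

lemma bwd_iter_hasB (al : Bool) (hm : 3 ≤ m) (z : ℤ × List Bool)
    (h : z.2.head? = some (!al)) (s : ℕ) :
    ((bwdZ m al)^[s] z).1 = z.1 - s := by
  have key : ∀ s, ((bwdZ m al)^[s] z).1 = z.1 - s ∧
      ((bwdZ m al)^[s] z).2.head? = some (!al) := by
    intro s
    induction s with
    | zero => simpa using h
    | succ s ih =>
      rw [Function.iterate_succ_apply']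
      have h2 := bwd_hasB m al hm _ ih.2
      refine ⟨?_, h2.2⟩
      rw [h2.1, ih.1]
      push_cast
      ring
  exact (key s).1

lemma final_I (bl : Bool) (hm : 3 ≤ m) (k : ℤ) (W : List Bool) (s t : ℕ)
    (ht : hcnt bl W ≤ t) :
    ((bwdZ m (!bl))^[s] ((bwdZ m bl)^[t] (k, W))).1 ≤ k + (hcnt bl W : ℤ) - t := by
  have h1 := b_phase m bl hm k W t ht
  calc ((bwdZ m (!bl))^[s] ((bwdZ m bl)^[t] (k, W))).1
      ≤ ((bwdZ m bl)^[t] (k, W)).1 := bwd_iter_k_le m (!bl) s _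
    _ = k + (hcnt bl W : ℤ) - t := h1.1

lemma final_II (bl : Bool) (hm : 3 ≤ m) (k : ℤ) (W : List Bool) (s t : ℕ)
    (ht : t < hcnt bl W) :
    ((bwdZ m (!bl))^[s] ((bwdZ m bl)^[t] (k, W))).1 = k - s := by
  rw [bwd_iter_within m bl k W t (by omega)]
  have hh : ((k, W.drop t) : ℤ × List Bool).2.head? = some (!(!bl)) := by
    simp only [Bool.not_not]
    exact hcnt_head bl W t ht
  exact bwd_iter_hasB m (!bl) hm _ hh s

lemma nu_one (hm : 3 ≤ m) : nu m hm 1 = (0, []) := by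
  simp only [nu, inv_one, map_one]
  rfl

lemma nu_mul_pow_inv (hm : 3 ≤ m) (g : DA m) (c : Bool) (n : ℕ) :
    nu m hm (g * ((genL m c)⁻¹)^n) = (bwdZ m c)^[n] (nu m hm g) := by
  induction n with
  | zero => simp
  | succ n ih =>
    rw [pow_succ, ← mul_assoc, nu_mul_genL_inv, ih, Function.iterate_succ_apply']

lemma nu_k_nonneg_of_pos (hm : 3 ≤ m) (g : DA m) (h : posElt m g) :
    0 ≤ (nu m hm g).1 := by
  rcases (posElt_iff m g).mp h with ⟨W, rfl⟩
  clear h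
  induction W using List.reverseRecOn with
  | nil => rw [show wordP m [] = 1 from rfl, nu_one]
  | append_singleton W c ih =>
    rw [wordP_append, show wordP m [c] = genL m c * 1 from rfl, mul_one, nu_mul_genL]
    exact le_trans ih (fwd_k_ge m c _)


lemma posElt_Delta : posElt m (Delta m) := by
  rw [Delta_eq_wordP]
  exact posElt_wordP m _

lemma lenZ_Delta_zpow (k : ℤ) : lenZ m (Delta m ^ k) = k * m := by
  simp only [lenZ, map_zpow, toAdd_zpow]
  have hD := lenZ_Delta m
  rw [lenZ] at hD
  rw [hD]
  simp

lemma nu_decomp (hm : 3 ≤ m) (g : DA m) :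
    g = Delta m ^ ((nu m hm g).1) * wordP m ((nu m hm g).2.reverse) := by
  have := psi_nu m hm g
  rw [psi] at this
  exact this.symm

lemma isLeftDiv_delta_pow (hm : 3 ≤ m) (g : DA m) (hpos : posElt m g) :
    IsLeftDiv (ℓD m) (Delta m ^ ((nu m hm g).1.toNat)) g := by
  set k₀ := (nu m hm g).1 with hk₀
  set U := wordP m ((nu m hm g).2.reverse) with hU'
  have hk0 : 0 ≤ k₀ := nu_k_nonneg_of_pos m hm g hpos
  have hzpow : Delta m ^ (k₀.toNat) = Delta m ^ k₀ := by
    rw [← zpow_natCast, Int.toNat_of_nonneg hk0]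
  have hdec : g = Delta m ^ k₀ * U := nu_decomp m hm g
  have hUdiv : (Delta m ^ (k₀.toNat))⁻¹ * g = U := by
    rw [hzpow]
    conv_lhs => rw [hdec]
    rw [inv_mul_cancel_left]
  have hposD : posElt m (Delta m ^ (k₀.toNat)) := Submonoid.pow_mem _ (posElt_Delta m) _
  have hposU : posElt m U := posElt_wordP m _
  have h1 : (ℓD m (Delta m ^ (k₀.toNat)) : ℤ) = (k₀.toNat : ℤ) * m := by
    rw [show ℓD m (Delta m ^ k₀.toNat)
        = wordLength (genSet 2 (DMat m)) (Delta m ^ k₀.toNat) from rfl,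
      wordLength_eq_lenZ_of_pos m _ hposD, lenZ_Delta_pow]
  have h2 : (ℓD m U : ℤ) = ((nu m hm g).2.length : ℤ) := by
    rw [show ℓD m U = wordLength (genSet 2 (DMat m)) U from rfl,
      wordLength_eq_lenZ_of_pos m _ hposU, hU', lenZ_wordP]
    simp
  have h3 : (ℓD m g : ℤ) = k₀ * m + ((nu m hm g).2.length : ℤ) := by
    rw [show ℓD m g = wordLength (genSet 2 (DMat m)) g from rfl,
      wordLength_eq_lenZ_of_pos m g hpos]
    conv_lhs => rw [hdec]
    rw [lenZ_mul, lenZ_Delta_zpow, hU', lenZ_wordP]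
    simp
  rw [IsLeftDiv, hUdiv]
  have hcast : (k₀.toNat : ℤ) = k₀ := Int.toNat_of_nonneg hk0
  have hfinal : ((ℓD m (Delta m ^ k₀.toNat) + ℓD m U : ℕ) : ℤ) = (ℓD m g : ℤ) := by
    push_cast
    rw [h1, h2, h3, hcast]
  exact_mod_cast hfinal

lemma rightDiv_to_pos (g h : DA m) (hposg : posElt m g) (hrd : IsRightDiv (ℓD m) h g)
    (W : List Bool) (hW : wordP m W = h) : posElt m (g * h⁻¹) := by
  have hlh_le : ℓD m h ≤ W.length := wordLength_le_of_wordP m h W hW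
  have hlh_ge : lenZ m h ≤ (ℓD m h : ℤ) := lenZ_le_wordLength m h
  have hlenh : lenZ m h = W.length := by rw [← hW, lenZ_wordP]
  have hlh : (ℓD m h : ℤ) = W.length := by
    have h' : (ℓD m h : ℤ) ≤ (W.length : ℤ) := by exact_mod_cast hlh_le
    omega
  have hlg : (ℓD m g : ℤ) = lenZ m g := wordLength_eq_lenZ_of_pos m g hposg
  have hrd' : (ℓD m (g * h⁻¹) : ℤ) + (ℓD m h : ℤ) = (ℓD m g : ℤ) := by
    exact_mod_cast hrd
  have hlZ : lenZ m (g * h⁻¹) = lenZ m g - W.length := by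
    rw [lenZ_mul, lenZ_inv, hlenh]
    ring
  apply pos_of_lenZ_eq
  show (ℓD m (g * h⁻¹) : ℤ) = lenZ m (g * h⁻¹)
  omega

lemma wordP_replicate (n : ℕ) (c : Bool) :
    wordP m (List.replicate n c) = genL m c ^ n := by
  induction n with
  | zero => simp
  | succ n ih => rw [List.replicate_succ, wordP_cons, ih, pow_succ']

theorem count_main
    (hm : 3 ≤ m) (g : DA m) (hpos : posElt m g)
    (r : ℕ) (hr : IsMaxDeltaPow m r g)
    (l : ℕ) (a b : DA m)
    (hab : (a = gen 2 (DMat m) 0 ∧ b = gen 2 (DMat m) 1) ∨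
           (a = gen 2 (DMat m) 1 ∧ b = gen 2 (DMat m) 0)) :
    {h : DA m | IsRightDiv (ℓD m) h g ∧
        ∃ s t : ℕ, s + t = l ∧ h = a ^ s * b ^ t}.Finite ∧
    {h : DA m | IsRightDiv (ℓD m) h g ∧
        ∃ s t : ℕ, s + t = l ∧ h = a ^ s * b ^ t}.ncard ≤ r + 1 := by
  classical
  obtain ⟨ca, ha, hb⟩ : ∃ ca : Bool, a = genL m ca ∧ b = genL m (!ca) := by
    rcases hab with ⟨h1, h2⟩ | ⟨h1, h2⟩
    · exact ⟨false, by rw [h1]; rfl, by rw [h2]; rfl⟩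
    · exact ⟨true, by rw [h1]; rfl, by rw [h2]; rfl⟩
  set z₀ := nu m hm g with hz₀
  have hk0 : 0 ≤ z₀.1 := nu_k_nonneg_of_pos m hm g hpos
  have hK : z₀.1.toNat ≤ r := hr.2 _ (isLeftDiv_delta_pow m hm g hpos)
  set cond : ℕ → Prop := fun s => 0 ≤ ((bwdZ m ca)^[s] ((bwdZ m (!ca))^[l-s] z₀)).1
    with hcond
  set Q : Finset ℕ := (Finset.range (l+1)).filter cond with hQdef
  set F : ℕ → DA m := fun s => a ^ s * b ^ (l - s) with hF
  have hsub : {h : DA m | IsRightDiv (ℓD m) h g ∧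
      ∃ s t : ℕ, s + t = l ∧ h = a ^ s * b ^ t} ⊆ F '' ↑Q := by
    rintro h' ⟨hdiv, s, t, hst, rfl⟩
    have hts : t = l - s := by omega
    have hsl : s ≤ l := by omega
    subst hts
    refine ⟨s, ?_, rfl⟩
    rw [Finset.mem_coe, hQdef, Finset.mem_filter, Finset.mem_range]
    refine ⟨by omega, ?_⟩
    set W := List.replicate s ca ++ List.replicate (l-s) (!ca) with hWdef
    have hW : wordP m W = a ^ s * b ^ (l-s) := by
      rw [hWdef, wordP_append, wordP_replicate, wordP_replicate, ha, hb]
    have hposc := rightDiv_to_pos m g _ hpos hdiv W hW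
    have hinv : (a ^ s * b ^ (l-s))⁻¹ = ((genL m (!ca))⁻¹)^(l-s) * ((genL m ca)⁻¹)^s := by
      rw [mul_inv_rev, ← inv_pow, ← inv_pow, ha, hb]
    have hnu : nu m hm (g * (a ^ s * b ^ (l-s))⁻¹)
        = (bwdZ m ca)^[s] ((bwdZ m (!ca))^[l-s] z₀) := by
      rw [hinv, ← mul_assoc, nu_mul_pow_inv, nu_mul_pow_inv, hz₀]
    have := nu_k_nonneg_of_pos m hm _ hposc
    rw [hnu] at this
    exact this
  have hQcard : Q.card ≤ z₀.1.toNat + 1 := by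
    by_cases hQ : Q.Nonempty
    · set mn := Q.min' hQ with hmn
      have hcondmn : cond mn := (Finset.mem_filter.mp (Q.min'_mem hQ)).2
      have hmnl : mn ≤ l := by
        have := (Finset.mem_filter.mp (Q.min'_mem hQ)).1
        rw [Finset.mem_range] at this
        omega
      have hwindow : ∀ s ∈ Q, s ≤ mn + z₀.1.toNat := by
        intro s hs
        have hmns : mn ≤ s := Q.min'_le s hs
        have hconds : cond s := (Finset.mem_filter.mp hs).2
        have hsl : s ≤ l := by
          have := (Finset.mem_filter.mp hs).1
          rw [Finset.mem_range] at this
          omega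
        set β₀ := hcnt (!ca) z₀.2 with hβ₀
        by_cases hcase : l - s < β₀
        · have h2 := final_II m (!ca) hm z₀.1 z₀.2 s (l - s) hcase
          rw [Bool.not_not, Prod.mk.eta] at h2
          rw [hcond] at hconds
          rw [h2] at hconds
          omega
        · have h1 := final_I m (!ca) hm z₀.1 z₀.2 mn (l - mn) (by omega)
          rw [Bool.not_not, Prod.mk.eta] at h1
          rw [hcond] at hcondmn
          have := le_trans hcondmn h1
          omega
      have hsubI : Q ⊆ Finset.Icc mn (mn + z₀.1.toNat) := by
        intro s hs
        rw [Finset.mem_Icc]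
        exact ⟨Q.min'_le s hs, hwindow s hs⟩
      calc Q.card ≤ (Finset.Icc mn (mn + z₀.1.toNat)).card := Finset.card_le_card hsubI
        _ = z₀.1.toNat + 1 := by rw [Nat.card_Icc]; omega
    · rw [Finset.not_nonempty_iff_eq_empty] at hQ
      rw [hQ]
      simp
  have hfin : (F '' ↑Q).Finite := Set.Finite.image F Q.finite_toSet
  refine ⟨Set.Finite.subset hfin hsub, ?_⟩
  calc {h : DA m | IsRightDiv (ℓD m) h g ∧
        ∃ s t : ℕ, s + t = l ∧ h = a ^ s * b ^ t}.ncard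
      ≤ (F '' ↑Q).ncard := Set.ncard_le_ncard hsub hfin
    _ ≤ (↑Q : Set ℕ).ncard := Set.ncard_image_le Q.finite_toSet
    _ = Q.card := Set.ncard_coe_finset Q
    _ ≤ z₀.1.toNat + 1 := hQcard
    _ ≤ r + 1 := by omega

end Count

/-- **Lemma.** For a positive element `g` of `DA(m)` and `{a,b} = {x₁,x₂}`, the number
of right divisors of `g` of the form `a^s b^t` with `s + t = l` is at most `d(g) + 1`. -/
theorem count_two_syllable_right_divisors
    (m : ℕ) (hm : 3 ≤ m) (g : DA m) (hpos : posElt m g)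
    (r : ℕ) (hr : IsMaxDeltaPow m r g)
    (l : ℕ) (a b : DA m)
    (hab : (a = gen 2 (DMat m) 0 ∧ b = gen 2 (DMat m) 1) ∨
           (a = gen 2 (DMat m) 1 ∧ b = gen 2 (DMat m) 0)) :
    {h : DA m | IsRightDiv (ℓD m) h g ∧
        ∃ s t : ℕ, s + t = l ∧ h = a ^ s * b ^ t}.Finite ∧
    {h : DA m | IsRightDiv (ℓD m) h g ∧
        ∃ s t : ℕ, s + t = l ∧ h = a ^ s * b ^ t}.ncard ≤ r + 1 := by
  exact count_main m hm g hpos r hr l a b hab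

end ArtinRD
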